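/- Let a ∈ W₁ (Wiener class with derivative in the Wiener class) and write T(a)^i = T(a^i) + E_i for i ≥ 1, where E_1 = 0 and E_i = T(a)E_{i−1} − H(a⁻)H((a^{i−1})⁺) for i ≥ 2. Then ‖E_i‖_F ≤ (i(i−1)/2) ‖a'‖_W² ‖a‖_W^{i−2}. -/

import Mathlib

/-- The semi-infinite Toeplitz matrix `T(a) = (a_{j-i})`, 0-based indices. -/
def Toep (a : ℤ → ℂ) : ℕ → ℕ → ℂ := fun i j => a ((j : ℤ) - i)

/-- Hankel matrix `H(a⁺) = (a_{i+j-1})`, 0-based indices. -/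
def HankP (a : ℤ → ℂ) : ℕ → ℕ → ℂ := fun i j => a ((i : ℤ) + j + 1)

/-- Hankel matrix `H(a⁻) = (a_{-i-j+1})`, 0-based indices. -/
def HankM (a : ℤ → ℂ) : ℕ → ℕ → ℂ := fun i j => a (-((i : ℤ) + j + 1))

/-- Product of two semi-infinite matrices. -/
noncomputable def tMul (A B : ℕ → ℕ → ℂ) : ℕ → ℕ → ℂ := fun i j => ∑' k : ℕ, A i k * B k j

/-- Coefficients of the power `a(z)^n` (bilateral convolution power). -/
noncomputable def convPow (a : ℤ → ℂ) : ℕ → ℤ → ℂ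
  | 0 => fun k => if k = 0 then 1 else 0
  | n + 1 => fun k => ∑' i : ℤ, a i * convPow a n (k - i)

/-- Entrywise ℓ¹ norm `‖·‖_F` of a semi-infinite matrix. -/
noncomputable def fNorm (E : ℕ → ℕ → ℂ) : ℝ := ∑' p : ℕ × ℕ, ‖E p.1 p.2‖

/-- Wiener norm `‖a‖_W = ∑|a_i|`. -/
noncomputable def wNorm (a : ℤ → ℂ) : ℝ := ∑' i : ℤ, ‖a i‖

/-- Norm of the derivative: `‖a'‖_W = ∑ |i|·|a_i|`. -/
noncomputable def dNorm (a : ℤ → ℂ) : ℝ := ∑' i : ℤ, |(i : ℝ)| * ‖a i‖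

open scoped ENNReal NNReal

/-- ENNReal-valued Wiener norm. -/
noncomputable def eW (a : ℤ → ℂ) : ℝ≥0∞ := ∑' i : ℤ, (‖a i‖₊ : ℝ≥0∞)

/-- ENNReal-valued derivative norm. -/
noncomputable def eD (a : ℤ → ℂ) : ℝ≥0∞ := ∑' i : ℤ, (i.natAbs : ℝ≥0∞) * (‖a i‖₊ : ℝ≥0∞)

/-- ENNReal-valued entrywise norm. -/
noncomputable def eF (B : ℕ → ℕ → ℂ) : ℝ≥0∞ := ∑' p : ℕ × ℕ, (‖B p.1 p.2‖₊ : ℝ≥0∞)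

lemma enn_tsum_nnnorm {ι : Type*} (f : ι → ℂ) :
    (‖∑' i, f i‖₊ : ℝ≥0∞) ≤ ∑' i, (‖f i‖₊ : ℝ≥0∞) := by
  by_cases h : Summable fun i => ‖f i‖₊
  · rw [← ENNReal.coe_tsum h]
    exact ENNReal.coe_le_coe.2 (nnnorm_tsum_le h)
  · have htop : (∑' i, (‖f i‖₊ : ℝ≥0∞)) = ∞ := by
      by_contra hne
      exact h (ENNReal.tsum_coe_ne_top_iff_summable.1 hne)
    simp [htop]

lemma convW (a : ℤ → ℂ) : ∀ n : ℕ,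
    (∑' m : ℤ, (‖convPow a n m‖₊ : ℝ≥0∞)) ≤ eW a ^ n := by
  intro n
  induction n with
  | zero =>
      have h : ∀ m : ℤ, (‖convPow a 0 m‖₊ : ℝ≥0∞) = if m = 0 then 1 else 0 := by
        intro m; simp only [convPow]; split <;> simp
      rw [tsum_congr h, tsum_ite_eq, pow_zero]
  | succ n ih =>
      have step : (∑' m : ℤ, (‖convPow a (n+1) m‖₊ : ℝ≥0∞))
          ≤ ∑' m : ℤ, ∑' i : ℤ, (‖a i‖₊ : ℝ≥0∞) * (‖convPow a n (m - i)‖₊ : ℝ≥0∞) := by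
        refine ENNReal.tsum_le_tsum fun m => ?_
        simp only [convPow]
        simpa [nnnorm_mul] using enn_tsum_nnnorm (fun i : ℤ => a i * convPow a n (m - i))
      refine le_trans step ?_
      rw [ENNReal.tsum_comm]
      have h2 : ∀ i : ℤ, (∑' m : ℤ, (‖a i‖₊ : ℝ≥0∞) * (‖convPow a n (m - i)‖₊ : ℝ≥0∞))
          = (‖a i‖₊ : ℝ≥0∞) * ∑' m : ℤ, (‖convPow a n m‖₊ : ℝ≥0∞) := by
        intro i
        rw [ENNReal.tsum_mul_left]
        congr 1
        simpa using (Equiv.subRight i).tsum_eq (fun m => (‖convPow a n m‖₊ : ℝ≥0∞))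
      rw [tsum_congr h2]
      calc (∑' i : ℤ, (‖a i‖₊ : ℝ≥0∞) * ∑' m : ℤ, (‖convPow a n m‖₊ : ℝ≥0∞))
          ≤ ∑' i : ℤ, (‖a i‖₊ : ℝ≥0∞) * eW a ^ n :=
            ENNReal.tsum_le_tsum fun i => mul_le_mul_right ih _
        _ = eW a ^ (n + 1) := by
            rw [ENNReal.tsum_mul_right, pow_succ, mul_comm (eW a ^ n)]
            rfl

lemma convD (a : ℤ → ℂ) : ∀ n : ℕ,
    eD (convPow a n) ≤ (n : ℝ≥0∞) * eW a ^ (n - 1) * eD a := by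
  intro n
  induction n with
  | zero =>
      have h : ∀ m : ℤ, (m.natAbs : ℝ≥0∞) * (‖convPow a 0 m‖₊ : ℝ≥0∞) = 0 := by
        intro m
        by_cases hm : m = 0
        · simp [hm]
        · simp [convPow, hm]
      simp [eD, tsum_congr h]
  | succ n ih =>
      have key : ∀ m : ℤ, (m.natAbs : ℝ≥0∞) * (‖convPow a (n+1) m‖₊ : ℝ≥0∞)
          ≤ ∑' i : ℤ, ((i.natAbs : ℝ≥0∞) + ((m - i).natAbs : ℝ≥0∞)) *
              ((‖a i‖₊ : ℝ≥0∞) * (‖convPow a n (m - i)‖₊ : ℝ≥0∞)) := by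
        intro m
        have h1 : (m.natAbs : ℝ≥0∞) * (‖convPow a (n+1) m‖₊ : ℝ≥0∞)
            ≤ ∑' i : ℤ, (m.natAbs : ℝ≥0∞) *
                ((‖a i‖₊ : ℝ≥0∞) * (‖convPow a n (m - i)‖₊ : ℝ≥0∞)) := by
          rw [ENNReal.tsum_mul_left]
          refine mul_le_mul_right ?_ _
          simp only [convPow]
          simpa [nnnorm_mul] using enn_tsum_nnnorm (fun i : ℤ => a i * convPow a n (m - i))
        refine le_trans h1 (ENNReal.tsum_le_tsum fun i => mul_le_mul_left ?_ _)
        rw [← Nat.cast_add, Nat.cast_le]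
        omega
      have step := le_trans (ENNReal.tsum_le_tsum key) (le_of_eq (ENNReal.tsum_comm))
      rw [eD] at *
      refine le_trans step ?_
      have h2 : ∀ i : ℤ, (∑' m : ℤ, ((i.natAbs : ℝ≥0∞) + ((m - i).natAbs : ℝ≥0∞)) *
              ((‖a i‖₊ : ℝ≥0∞) * (‖convPow a n (m - i)‖₊ : ℝ≥0∞)))
          = (i.natAbs : ℝ≥0∞) * (‖a i‖₊ : ℝ≥0∞) * (∑' m : ℤ, (‖convPow a n m‖₊ : ℝ≥0∞))
            + (‖a i‖₊ : ℝ≥0∞) * (∑' m : ℤ, ((m.natAbs : ℝ≥0∞) * (‖convPow a n m‖₊ : ℝ≥0∞))) := by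
        intro i
        have : ∀ m : ℤ, ((i.natAbs : ℝ≥0∞) + ((m - i).natAbs : ℝ≥0∞)) *
              ((‖a i‖₊ : ℝ≥0∞) * (‖convPow a n (m - i)‖₊ : ℝ≥0∞))
            = (i.natAbs : ℝ≥0∞) * (‖a i‖₊ : ℝ≥0∞) * (‖convPow a n (m - i)‖₊ : ℝ≥0∞)
              + (‖a i‖₊ : ℝ≥0∞) * (((m - i).natAbs : ℝ≥0∞) * (‖convPow a n (m - i)‖₊ : ℝ≥0∞)) := by
          intro m; ring
        rw [tsum_congr this, ENNReal.tsum_add, ENNReal.tsum_mul_left, ENNReal.tsum_mul_left]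
        congr 2
        · simpa using (Equiv.subRight i).tsum_eq (fun m => (‖convPow a n m‖₊ : ℝ≥0∞))
        · simpa using (Equiv.subRight i).tsum_eq
            (fun m => ((m.natAbs : ℝ≥0∞) * (‖convPow a n m‖₊ : ℝ≥0∞)))
      rw [tsum_congr h2, ENNReal.tsum_add]
      have hA : (∑' i : ℤ, (i.natAbs : ℝ≥0∞) * (‖a i‖₊ : ℝ≥0∞) *
            (∑' m : ℤ, (‖convPow a n m‖₊ : ℝ≥0∞)))
          ≤ eD a * eW a ^ n := by
        rw [ENNReal.tsum_mul_right]
        exact mul_le_mul (le_refl _) (convW a n) zero_le zero_le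
      have hB : (∑' i : ℤ, (‖a i‖₊ : ℝ≥0∞) *
            (∑' m : ℤ, ((m.natAbs : ℝ≥0∞) * (‖convPow a n m‖₊ : ℝ≥0∞))))
          ≤ eW a * ((n : ℝ≥0∞) * eW a ^ (n - 1) * eD a) := by
        rw [ENNReal.tsum_mul_right]
        exact mul_le_mul (le_refl _) ih zero_le zero_le
      refine le_trans (add_le_add hA hB) ?_
      cases n with
      | zero => simp
      | succ k =>
          have : eW a * ((((k:ℕ)+1 : ℕ) : ℝ≥0∞) * eW a ^ (k + 1 - 1) * eD a)
              = ((k+1 : ℕ) : ℝ≥0∞) * eW a ^ (k + 1) * eD a := by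
            simp only [Nat.add_sub_cancel]
            rw [pow_succ]
            ring
          rw [this]
          have hcast : ((k + 1 + 1 : ℕ) : ℝ≥0∞) = ((k+1 : ℕ) : ℝ≥0∞) + 1 := by push_cast; ring
          simp only [Nat.add_sub_cancel, hcast]
          ring_nf
          exact le_of_eq (by ring)

lemma toep_bound (a : ℤ → ℂ) (B : ℕ → ℕ → ℂ) :
    eF (fun p q => tMul (Toep a) B p q) ≤ eW a * eF B := by
  have tail : ∀ k : ℕ, (∑' p : ℕ, (‖a ((k:ℤ) - p)‖₊ : ℝ≥0∞)) ≤ eW a := by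
    intro k
    have hinj : Function.Injective (fun p : ℕ => (k : ℤ) - p) := by
      intro x y h; simp only at h; omega
    exact ENNReal.tsum_comp_le_tsum_of_injective hinj (fun m => (‖a m‖₊ : ℝ≥0∞))
  calc eF (fun p q => tMul (Toep a) B p q)
      = ∑' p : ℕ, ∑' q : ℕ, (‖∑' k : ℕ, a ((k:ℤ) - p) * B k q‖₊ : ℝ≥0∞) := by
        rw [eF]
        exact ENNReal.tsum_prod
          (f := fun (p : ℕ) (q : ℕ) => (‖∑' k : ℕ, a ((k:ℤ) - (p:ℤ)) * B k q‖₊ : ℝ≥0∞))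
    _ ≤ ∑' p : ℕ, ∑' q : ℕ, ∑' k : ℕ, (‖a ((k:ℤ) - p)‖₊ : ℝ≥0∞) * (‖B k q‖₊ : ℝ≥0∞) := by
        refine ENNReal.tsum_le_tsum fun p => ENNReal.tsum_le_tsum fun q => ?_
        simpa [nnnorm_mul] using enn_tsum_nnnorm (fun k : ℕ => a ((k:ℤ) - p) * B k q)
    _ = ∑' q : ℕ, ∑' k : ℕ, (∑' p : ℕ, (‖a ((k:ℤ) - p)‖₊ : ℝ≥0∞)) * (‖B k q‖₊ : ℝ≥0∞) := by
        rw [ENNReal.tsum_comm]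
        refine tsum_congr fun q => ?_
        rw [ENNReal.tsum_comm]
        exact tsum_congr fun k => ENNReal.tsum_mul_right
    _ ≤ ∑' q : ℕ, ∑' k : ℕ, eW a * (‖B k q‖₊ : ℝ≥0∞) :=
        ENNReal.tsum_le_tsum fun q => ENNReal.tsum_le_tsum fun k =>
          mul_le_mul_left (tail k) _
    _ = eW a * eF B := by
        simp only [ENNReal.tsum_mul_left]
        congr 1
        rw [eF]
        rw [ENNReal.tsum_prod (f := fun p q => (‖B p q‖₊ : ℝ≥0∞)),
          ENNReal.tsum_comm (f := fun p q => (‖B p q‖₊ : ℝ≥0∞))]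

lemma hank_bound (a b : ℤ → ℂ) :
    eF (fun p q => tMul (HankM a) (HankP b) p q) ≤ eD a * eD b := by
  have tail : ∀ k : ℕ, (∑' q : ℕ, (‖b ((k:ℤ) + q + 1)‖₊ : ℝ≥0∞)) ≤ eD b := by
    intro k
    have h1 : ∀ q : ℕ, (‖b ((k:ℤ) + q + 1)‖₊ : ℝ≥0∞)
        ≤ ((((k:ℤ) + q + 1).natAbs : ℝ≥0∞)) * (‖b ((k:ℤ) + q + 1)‖₊ : ℝ≥0∞) := by
      intro q
      refine le_mul_of_one_le_left zero_le ?_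
      have : 1 ≤ ((k:ℤ) + q + 1).natAbs := by omega
      exact_mod_cast this
    refine le_trans (ENNReal.tsum_le_tsum h1) ?_
    have hinj : Function.Injective (fun q : ℕ => (k : ℤ) + q + 1) := by
      intro x y h; simp only at h; omega
    exact ENNReal.tsum_comp_le_tsum_of_injective hinj
      (fun m => (m.natAbs : ℝ≥0∞) * (‖b m‖₊ : ℝ≥0∞))
  have headS : (∑' k : ℕ, ∑' p : ℕ, (‖a (-((p:ℤ) + k + 1))‖₊ : ℝ≥0∞)) ≤ eD a := by
    rw [show (∑' (k : ℕ) (p : ℕ), (‖a (-((p:ℤ) + k + 1))‖₊ : ℝ≥0∞))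
        = ∑' x : ℕ × ℕ, (‖a (-((x.2:ℤ) + x.1 + 1))‖₊ : ℝ≥0∞) from
      (ENNReal.tsum_prod
        (f := fun (k : ℕ) (p : ℕ) => (‖a (-((p:ℤ) + (k:ℤ) + 1))‖₊ : ℝ≥0∞))).symm]
    set g : ℕ × ℤ → ℝ≥0∞ := fun x => if (x.1 : ℤ) < -x.2 then (‖a x.2‖₊ : ℝ≥0∞) else 0 with hg
    have hinj : Function.Injective (fun x : ℕ × ℕ => ((x.1, -((x.2:ℤ) + x.1 + 1)) : ℕ × ℤ)) := by
      intro x y h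
      simp only [Prod.mk.injEq] at h
      obtain ⟨h1, h2⟩ := h
      have : x.2 = y.2 := by omega
      exact Prod.ext h1 this
    have hcomp : ∀ x : ℕ × ℕ, (‖a (-((x.2:ℤ) + x.1 + 1))‖₊ : ℝ≥0∞)
        = g (x.1, -((x.2:ℤ) + x.1 + 1)) := by
      intro x
      rw [hg]
      simp only
      rw [if_pos (by omega)]
    calc (∑' x : ℕ × ℕ, (‖a (-((x.2:ℤ) + x.1 + 1))‖₊ : ℝ≥0∞))
        = ∑' x : ℕ × ℕ, g ((fun x : ℕ × ℕ => ((x.1, -((x.2:ℤ) + x.1 + 1)) : ℕ × ℤ)) x) :=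
          tsum_congr hcomp
      _ ≤ ∑' y : ℕ × ℤ, g y := ENNReal.tsum_comp_le_tsum_of_injective hinj g
      _ = ∑' m : ℤ, ∑' k : ℕ, g (k, m) := by
          rw [ENNReal.tsum_prod', ENNReal.tsum_comm]
      _ ≤ ∑' m : ℤ, (m.natAbs : ℝ≥0∞) * (‖a m‖₊ : ℝ≥0∞) := by
          refine ENNReal.tsum_le_tsum fun m => ?_
          have hz : ∀ k : ℕ, k ∉ Finset.range ((-m).toNat) → g (k, m) = 0 := by
            intro k hk
            rw [hg]
            simp only
            rw [if_neg]
            simp only [Finset.mem_range] at hk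
            omega
          rw [tsum_eq_sum hz]
          have : ∀ k ∈ Finset.range ((-m).toNat), g (k, m) ≤ (‖a m‖₊ : ℝ≥0∞) := by
            intro k _
            rw [hg]; simp only
            split <;> simp
          refine le_trans (Finset.sum_le_sum this) ?_
          rw [Finset.sum_const, Finset.card_range, nsmul_eq_mul]
          refine mul_le_mul_left ?_ _
          have : (-m).toNat ≤ m.natAbs := by omega
          exact_mod_cast this
      _ = eD a := rfl
  calc eF (fun p q => tMul (HankM a) (HankP b) p q)
      = ∑' p : ℕ, ∑' q : ℕ, (‖∑' k : ℕ, a (-((p:ℤ) + k + 1)) * b ((k:ℤ) + q + 1)‖₊ : ℝ≥0∞) := by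
        rw [eF]
        exact ENNReal.tsum_prod
          (f := fun (p : ℕ) (q : ℕ) =>
            (‖∑' k : ℕ, a (-((p:ℤ) + (k:ℤ) + 1)) * b ((k:ℤ) + (q:ℤ) + 1)‖₊ : ℝ≥0∞))
    _ ≤ ∑' p : ℕ, ∑' q : ℕ, ∑' k : ℕ,
          (‖a (-((p:ℤ) + k + 1))‖₊ : ℝ≥0∞) * (‖b ((k:ℤ) + q + 1)‖₊ : ℝ≥0∞) := by
        refine ENNReal.tsum_le_tsum fun p => ENNReal.tsum_le_tsum fun q => ?_
        simpa [nnnorm_mul] using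
          enn_tsum_nnnorm (fun k : ℕ => a (-((p:ℤ) + k + 1)) * b ((k:ℤ) + q + 1))
    _ = ∑' p : ℕ, ∑' k : ℕ, (‖a (-((p:ℤ) + k + 1))‖₊ : ℝ≥0∞) *
          (∑' q : ℕ, (‖b ((k:ℤ) + q + 1)‖₊ : ℝ≥0∞)) := by
        refine tsum_congr fun p => ?_
        rw [ENNReal.tsum_comm]
        exact tsum_congr fun k => ENNReal.tsum_mul_left
    _ = ∑' k : ℕ, ∑' p : ℕ, (‖a (-((p:ℤ) + k + 1))‖₊ : ℝ≥0∞) *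
          (∑' q : ℕ, (‖b ((k:ℤ) + q + 1)‖₊ : ℝ≥0∞)) := ENNReal.tsum_comm
    _ ≤ ∑' k : ℕ, ∑' p : ℕ, (‖a (-((p:ℤ) + k + 1))‖₊ : ℝ≥0∞) * eD b :=
        ENNReal.tsum_le_tsum fun k => ENNReal.tsum_le_tsum fun p => mul_le_mul_right (tail k) _
    _ = (∑' k : ℕ, ∑' p : ℕ, (‖a (-((p:ℤ) + k + 1))‖₊ : ℝ≥0∞)) * eD b := by
        simp only [ENNReal.tsum_mul_right]
    _ ≤ eD a * eD b := mul_le_mul_left headS _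

theorem correction_bound (a : ℤ → ℂ)
    (ha : Summable fun i : ℤ => ‖a i‖)
    (ha' : Summable fun i : ℤ => |(i : ℝ)| * ‖a i‖)
    (E : ℕ → ℕ → ℕ → ℂ)
    (hE1 : E 1 = fun _ _ => 0)
    (hErec : ∀ i : ℕ, 2 ≤ i →
      E i = fun p q =>
        tMul (Toep a) (E (i - 1)) p q - tMul (HankM a) (HankP (convPow a (i - 1))) p q) :
    ∀ i : ℕ, 1 ≤ i →
      fNorm (E i) ≤ (i * (i - 1) : ℝ) / 2 * dNorm a ^ 2 * wNorm a ^ (i - 2) := by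
  have hW0 : 0 ≤ wNorm a := tsum_nonneg fun _ => norm_nonneg _
  have hD0 : 0 ≤ dNorm a := tsum_nonneg fun i => mul_nonneg (abs_nonneg _) (norm_nonneg _)
  have hW : eW a = ENNReal.ofReal (wNorm a) := by
    rw [wNorm, ENNReal.ofReal_tsum_of_nonneg (fun _ => norm_nonneg _) ha, eW]
    exact tsum_congr fun i => (ofReal_norm (a i)).symm
  have hD : eD a = ENNReal.ofReal (dNorm a) := by
    rw [dNorm, ENNReal.ofReal_tsum_of_nonneg
      (fun i => mul_nonneg (abs_nonneg _) (norm_nonneg _)) ha', eD]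
    refine tsum_congr fun i => ?_
    rw [ENNReal.ofReal_mul (abs_nonneg _), ofReal_norm]
    congr 1
    have : |((i : ℤ) : ℝ)| = ((i.natAbs : ℕ) : ℝ) := by
      rw [Nat.cast_natAbs, Int.cast_abs]
    rw [this, ENNReal.ofReal_natCast]
  have main : ∀ i : ℕ, 1 ≤ i →
      eF (E i) ≤ (i.choose 2 : ℝ≥0∞) * eD a ^ 2 * eW a ^ (i - 2) := by
    intro i hi
    induction i, hi using Nat.le_induction with
    | base => simp [hE1, eF]
    | succ i hi ih =>
        have h2 : 2 ≤ i + 1 := by omega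
        have hrec := hErec (i + 1) h2
        simp only [Nat.add_sub_cancel] at hrec
        have hstep : eF (E (i + 1)) ≤ eW a * eF (E i)
            + eD a * ((i : ℝ≥0∞) * eW a ^ (i - 1) * eD a) := by
          rw [hrec]
          have hsplit : eF (fun p q => tMul (Toep a) (E i) p q
                - tMul (HankM a) (HankP (convPow a i)) p q)
              ≤ eF (fun p q => tMul (Toep a) (E i) p q)
                + eF (fun p q => tMul (HankM a) (HankP (convPow a i)) p q) := by
            simp only [eF]
            rw [← ENNReal.tsum_add]
            refine ENNReal.tsum_le_tsum fun p => ?_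
            calc (‖tMul (Toep a) (E i) p.1 p.2
                  - tMul (HankM a) (HankP (convPow a i)) p.1 p.2‖₊ : ℝ≥0∞)
                ≤ ((‖tMul (Toep a) (E i) p.1 p.2‖₊
                    + ‖tMul (HankM a) (HankP (convPow a i)) p.1 p.2‖₊ : ℝ≥0) : ℝ≥0∞) :=
                  ENNReal.coe_le_coe.2 (nnnorm_sub_le _ _)
              _ = _ := ENNReal.coe_add _ _
          refine le_trans hsplit (add_le_add (toep_bound a (E i))
            (le_trans (hank_bound a (convPow a i)) (mul_le_mul_right (convD a i) _)))
        refine le_trans hstep ?_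
        refine le_trans (add_le_add (mul_le_mul_right ih _) (le_refl _)) ?_
        have hch : ((i + 1).choose 2 : ℕ) = i.choose 2 + i := by
          rw [Nat.choose_succ_succ, Nat.choose_one_right, Nat.add_comm]
        rw [hch]
        have hsub : i + 1 - 2 = i - 1 := by omega
        rw [hsub]
        have hcast : ((i.choose 2 + i : ℕ) : ℝ≥0∞)
            = (i.choose 2 : ℝ≥0∞) + (i : ℝ≥0∞) := by push_cast; ring
        rw [hcast, add_mul, add_mul]
        refine add_le_add ?_ (le_of_eq (by ring))
        rcases Nat.lt_or_ge i 2 with hlt | hge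
        · interval_cases i
          · simp
        · have hpow : eW a * eW a ^ (i - 2) = eW a ^ (i - 1) := by
            rw [← pow_succ']
            congr 1
            omega
          refine le_of_eq ?_
          calc eW a * ((i.choose 2 : ℝ≥0∞) * eD a ^ 2 * eW a ^ (i - 2))
              = (i.choose 2 : ℝ≥0∞) * eD a ^ 2 * (eW a * eW a ^ (i - 2)) := by ring
            _ = (i.choose 2 : ℝ≥0∞) * eD a ^ 2 * eW a ^ (i - 1) := by rw [hpow]
  intro i hi
  have h := main i hi
  rw [hW, hD] at h
  have hfin : ((i.choose 2 : ℝ≥0∞) * ENNReal.ofReal (dNorm a) ^ 2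
      * ENNReal.ofReal (wNorm a) ^ (i - 2)) ≠ ∞ := by
    refine ENNReal.mul_ne_top (ENNReal.mul_ne_top ?_ ?_) ?_
    · exact ENNReal.natCast_ne_top _
    · exact ENNReal.pow_ne_top ENNReal.ofReal_ne_top
    · exact ENNReal.pow_ne_top ENNReal.ofReal_ne_top
  have hF : fNorm (E i) = (eF (E i)).toReal := by
    rw [eF, ENNReal.tsum_toReal_eq (fun p => ENNReal.coe_ne_top), fNorm]
    exact tsum_congr fun p => by simp
  calc fNorm (E i) = (eF (E i)).toReal := hF
    _ ≤ ((i.choose 2 : ℝ≥0∞) * ENNReal.ofReal (dNorm a) ^ 2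
          * ENNReal.ofReal (wNorm a) ^ (i - 2)).toReal := ENNReal.toReal_mono hfin h
    _ = (i.choose 2 : ℝ) * dNorm a ^ 2 * wNorm a ^ (i - 2) := by
        rw [ENNReal.toReal_mul, ENNReal.toReal_mul, ENNReal.toReal_pow, ENNReal.toReal_pow,
          ENNReal.toReal_ofReal hD0, ENNReal.toReal_ofReal hW0, ENNReal.toReal_natCast]
    _ = (i * (i - 1) : ℝ) / 2 * dNorm a ^ 2 * wNorm a ^ (i - 2) := by
        rw [Nat.cast_choose_two]
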